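/- Suppose a Lie algebra homomorphism σ : W_> → Diff¹(ℂ((z))) satisfies: for every i ≥ -1 there exist r_i, s_i, t_i ∈ ℂ with σ(L_i) = r_i·1 + s_i·z^{-(2i+3)} + t_i·z^{-2i}(z∂_z + (1-2i)/2), and t_0 ≠ 0, and σ arises from data (h,c,b) via σ(L_i) = -(h^{i+1}/h')∂_z - (i+1)c·h^i + (h^{i+1}/h')b with h'(z) invertible. Then there exist s, t ∈ ℂ, t ≠ 0, such that σ(L_i) = t^i((1/2)z^{-2i}(z∂_z + (1-2i)/2) + s·z^{-2i-3}) for all i ≥ -1; in particular h(z) = t·z^{-2}, c = 1/2, r_i = 0 for all i, and b(z) = -(3/2)z^{-1} - 2s·z^{-4}. -/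

import Mathlib

/-- The operator `z ∂_z` on `ℂ((z))`. -/
noncomputable def zDz : LaurentSeries ℂ →ₗ[ℂ] LaurentSeries ℂ where
  toFun f :=
    { coeff := fun n => (n : ℂ) * f.coeff n
      isPWO_support' := f.isPWO_support'.mono (by
        intro n hn
        simp only [Function.mem_support] at hn ⊢
        intro h
        exact hn (by rw [h, mul_zero])) }
  map_add' f g := by ext n; simp [mul_add]
  map_smul' c f := by ext n; simp; ring

/-- Multiplication by `z^k` on `ℂ((z))`. -/
noncomputable def zPow (k : ℤ) : LaurentSeries ℂ →ₗ[ℂ] LaurentSeries ℂ where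
  toFun f :=
    { coeff := fun n => f.coeff (n - k)
      isPWO_support' := by
        refine (f.isPWO_support'.image_of_monotone
          (f := fun m => m + k) (fun a b hab => by dsimp; omega)).mono ?_
        intro n hn
        exact ⟨n - k, hn, by dsimp; ring⟩ }
  map_add' f g := by ext n; simp
  map_smul' c f := by ext n; simp

/-- The derivative `∂_z` on `ℂ((z))`. -/
noncomputable def Dz : LaurentSeries ℂ →ₗ[ℂ] LaurentSeries ℂ where
  toFun f :=
    { coeff := fun n => ((n + 1 : ℤ) : ℂ) * f.coeff (n + 1)
      isPWO_support' := by
        refine (f.isPWO_support'.image_of_monotone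
          (f := fun m => m - 1) (fun a b hab => by dsimp; omega)).mono ?_
        intro n hn
        simp only [Function.mem_support] at hn
        refine ⟨n + 1, fun h => hn (by rw [h, mul_zero]), by dsimp; ring⟩ }
  map_add' f g := by ext n; simp [mul_add]
  map_smul' c f := by ext n; simp; ring

/-- Multiplication by a fixed Laurent series `g`. -/
noncomputable def mulOp (g : LaurentSeries ℂ) : LaurentSeries ℂ →ₗ[ℂ] LaurentSeries ℂ where
  toFun f := g * f
  map_add' f1 f2 := mul_add g f1 f2
  map_smul' c f := by
    have h : ∀ x : LaurentSeries ℂ, c • x = (HahnSeries.single (0 : ℤ) c) * x :=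
      fun x => (HahnSeries.single_zero_mul_eq_smul).symm
    simp only [RingHom.id_apply, h]
    ring

/-- The operator `σ(L_i) = -(h^{i+1}/h') ∂_z - (i+1) c h^i + (h^{i+1}/h') b`. -/
noncomputable def sigmaHCB (h : LaurentSeries ℂ) (c : ℂ) (b : LaurentSeries ℂ)
    (i : ℤ) : LaurentSeries ℂ →ₗ[ℂ] LaurentSeries ℂ :=
  (-(1 : ℂ)) • (mulOp (h ^ (i + 1) / Dz h) ∘ₗ Dz)
    - (((i + 1 : ℤ) : ℂ) * c) • mulOp (h ^ i)
    + mulOp ((h ^ (i + 1) / Dz h) * b)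


section AuxLemmas

open HahnSeries

lemma zPow_coeff (k : ℤ) (f : LaurentSeries ℂ) (m : ℤ) :
    (zPow k f).coeff m = f.coeff (m - k) := rfl

lemma zDz_coeff (f : LaurentSeries ℂ) (m : ℤ) :
    (zDz f).coeff m = (m : ℂ) * f.coeff m := rfl

lemma Dz_coeff (f : LaurentSeries ℂ) (m : ℤ) :
    (Dz f).coeff m = ((m + 1 : ℤ) : ℂ) * f.coeff (m + 1) := rfl

lemma mulOp_apply (g f : LaurentSeries ℂ) : mulOp g f = g * f := rfl

lemma smul_single' (a : ℂ) (k : ℤ) (x : ℂ) :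
    a • (HahnSeries.single k x : LaurentSeries ℂ) = HahnSeries.single k (a * x) := by
  ext m
  simp [HahnSeries.coeff_smul, HahnSeries.coeff_single, mul_ite]

lemma Dz_single (n : ℤ) (a : ℂ) :
    Dz (HahnSeries.single n a : LaurentSeries ℂ) = HahnSeries.single (n - 1) ((n : ℂ) * a) := by
  ext m
  rw [Dz_coeff, HahnSeries.coeff_single, HahnSeries.coeff_single]
  by_cases hm : m = n - 1
  · rw [if_pos (by omega), if_pos hm, show m + 1 = n by omega]
  · rw [if_neg (by omega), if_neg hm, mul_zero]

lemma Dz_one : Dz (1 : LaurentSeries ℂ) = 0 := by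
  rw [← HahnSeries.single_zero_one, Dz_single]
  simp

lemma Dz_Z : Dz (HahnSeries.single 1 1 : LaurentSeries ℂ) = 1 := by
  rw [Dz_single]
  norm_num [HahnSeries.single_zero_one]

lemma single_zpow' (k : ℤ) (a : ℂ) (ha : a ≠ 0) (n : ℤ) :
    (HahnSeries.single k a : LaurentSeries ℂ) ^ n = HahnSeries.single (n * k) (a ^ n) := by
  obtain ⟨m, rfl | rfl⟩ := n.eq_nat_or_neg
  · rw [zpow_natCast, zpow_natCast, HahnSeries.single_pow, nsmul_eq_mul]
  · rw [zpow_neg, zpow_natCast, zpow_neg, zpow_natCast, HahnSeries.single_pow,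
      show (-(m:ℤ) * k) = -((m : ℕ) • k) by push_cast [nsmul_eq_mul]; ring]
    exact HahnSeries.inv_single _ _

lemma mulZ (x : LaurentSeries ℂ) (m : ℤ) :
    (x * HahnSeries.single 1 1).coeff m = x.coeff (m - 1) := by
  have h := HahnSeries.coeff_mul_single_add (x := x) (a := m - 1) (b := (1:ℤ)) (r := (1:ℂ))
  rw [mul_one, show m - 1 + 1 = m by ring] at h
  exact h

end AuxLemmas

set_option maxHeartbeats 2000000 in
/-- Lemma 3.6 (lem:sigma): a Lie algebra homomorphism `σ : W_> → Diff¹(ℂ((z)))` with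
`σ(L_i) = r_i·1 + s_i·z^{-(2i+3)} + t_i·z^{-2i}(z∂_z + (1-2i)/2)`, `t_0 ≠ 0`, arising
from data `(h, c, b)`, must be of the form
`σ(L_i) = t^i ((1/2) z^{-2i}(z∂_z + (1-2i)/2) + s z^{-2i-3})`; in particular
`h = t z^{-2}`, `c = 1/2`, `r_i = 0` and `b = -(3/2) z^{-1} - 2s z^{-4}`. -/
theorem sigma_classification
    (σ : ℤ → (LaurentSeries ℂ →ₗ[ℂ] LaurentSeries ℂ))
    (hhom : ∀ i j : ℤ, -1 ≤ i → -1 ≤ j →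
      σ i ∘ₗ σ j - σ j ∘ₗ σ i = ((i - j : ℤ) : ℂ) • σ (i + j))
    (r s t : ℤ → ℂ)
    (hform : ∀ i : ℤ, -1 ≤ i →
      σ i = r i • LinearMap.id + s i • zPow (-(2 * i + 3))
        + t i • (zPow (-2 * i) ∘ₗ (zDz + (((1 - 2 * i : ℤ) : ℂ)/2) • LinearMap.id)))
    (ht0 : t 0 ≠ 0)
    (h : LaurentSeries ℂ) (c : ℂ) (b : LaurentSeries ℂ) (hd : Dz h ≠ 0)
    (harise : ∀ i : ℤ, -1 ≤ i → σ i = sigmaHCB h c b i) :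
    ∃ S T : ℂ, T ≠ 0 ∧
      (∀ i : ℤ, -1 ≤ i →
        σ i = (T ^ i) • (((1 : ℂ)/2) •
            (zPow (-2 * i) ∘ₗ (zDz + (((1 - 2 * i : ℤ) : ℂ)/2) • LinearMap.id))
          + S • zPow (-2 * i - 3))) ∧
      h = T • HahnSeries.single (-2 : ℤ) (1 : ℂ) ∧
      c = 1/2 ∧
      (∀ i : ℤ, -1 ≤ i → r i = 0) ∧
      b = (-(3 : ℂ)/2) • HahnSeries.single (-1 : ℤ) (1 : ℂ)
        - (2 * S) • HahnSeries.single (-4 : ℤ) (1 : ℂ) := by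
  have h0 : (-1 : ℤ) ≤ 0 := by norm_num
  have h1 : (-1 : ℤ) ≤ 1 := by norm_num
  have hm1 : (-1 : ℤ) ≤ -1 := le_refl _
  -- coefficient formula for σ i
  have cs : ∀ i : ℤ, -1 ≤ i → ∀ f : LaurentSeries ℂ, ∀ m : ℤ,
      (σ i f).coeff m = r i * f.coeff m + s i * f.coeff (m + (2*i+3))
        + t i * (((m + 2*i : ℤ) : ℂ) + ((1 - 2*i : ℤ) : ℂ)/2) * f.coeff (m + 2*i) := by
    intro i hi f m
    rw [hform i hi]
    simp only [LinearMap.add_apply, LinearMap.smul_apply, LinearMap.comp_apply,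
      LinearMap.id_apply, HahnSeries.coeff_add, HahnSeries.coeff_smul, smul_eq_mul,
      zPow_coeff, zDz_coeff]
    rw [show m - -(2 * i + 3) = m + (2*i+3) by ring, show m - -2 * i = m + 2*i by ring]
    push_cast
    ring
  -- coefficient of σ i applied to a single
  have vv : ∀ i : ℤ, -1 ≤ i → ∀ n p : ℤ,
      (σ i (HahnSeries.single n 1)).coeff p
        = (if p = n then r i else 0) + (if p + (2*i+3) = n then s i else 0)
          + (if p + 2*i = n then
              t i * (((p + 2*i : ℤ) : ℂ) + ((1 - 2*i : ℤ) : ℂ)/2) else 0) := by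
    intro i hi n p
    rw [cs i hi]
    simp only [HahnSeries.coeff_single, mul_ite, mul_one, mul_zero]
  -- targeted evaluations
  have vz : ∀ j : ℤ, -1 ≤ j → ∀ n p : ℤ, p ≠ n → p + (2*j+3) ≠ n → p + 2*j ≠ n →
      (σ j (HahnSeries.single n 1)).coeff p = 0 := by
    intro j hj n p e1 e2 e3
    rw [vv j hj, if_neg e1, if_neg e2, if_neg e3]; ring
  have vr : ∀ j : ℤ, -1 ≤ j → ∀ n p : ℤ, p = n → p + (2*j+3) ≠ n → p + 2*j ≠ n →
      (σ j (HahnSeries.single n 1)).coeff p = r j := by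
    intro j hj n p e1 e2 e3
    rw [vv j hj, if_pos e1, if_neg e2, if_neg e3]; ring
  have vs : ∀ j : ℤ, -1 ≤ j → ∀ n p : ℤ, p ≠ n → p + (2*j+3) = n → p + 2*j ≠ n →
      (σ j (HahnSeries.single n 1)).coeff p = s j := by
    intro j hj n p e1 e2 e3
    rw [vv j hj, if_neg e1, if_pos e2, if_neg e3]; ring
  have vt : ∀ j : ℤ, -1 ≤ j → ∀ n p : ℤ, p ≠ n → p + (2*j+3) ≠ n → p + 2*j = n →
      (σ j (HahnSeries.single n 1)).coeff p
        = t j * (((p + 2*j : ℤ) : ℂ) + ((1 - 2*j : ℤ) : ℂ)/2) := by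
    intro j hj n p e1 e2 e3
    rw [vv j hj, if_neg e1, if_neg e2, if_pos e3]; ring
  have vrt : ∀ j : ℤ, -1 ≤ j → ∀ n p : ℤ, p = n → p + (2*j+3) ≠ n → p + 2*j = n →
      (σ j (HahnSeries.single n 1)).coeff p
        = r j + t j * (((p + 2*j : ℤ) : ℂ) + ((1 - 2*j : ℤ) : ℂ)/2) := by
    intro j hj n p e1 e2 e3
    rw [vv j hj, if_pos e1, if_neg e2, if_pos e3]; ring
  -- E1 : t 0 * t 1 = t 1 / 2
  have E1 : t 0 * t 1 = t 1 / 2 := by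
    have L1 : ((σ 0) ((σ 1) (HahnSeries.single (1:ℤ) (1:ℂ)))).coeff (-1)
        = r 0 * (t 1 / 2) - t 0 * t 1 / 4 := by
      rw [cs 0 h0,
        vt 1 h1 1 (-1) (by omega) (by omega) (by omega),
        vz 1 h1 1 (-1 + (2*0+3)) (by omega) (by omega) (by omega),
        vt 1 h1 1 (-1 + 2*0) (by omega) (by omega) (by omega)]
      push_cast; ring
    have L2 : ((σ 1) ((σ 0) (HahnSeries.single (1:ℤ) (1:ℂ)))).coeff (-1)
        = t 1 / 2 * (r 0 + 3 * t 0 / 2) := by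
      rw [cs 1 h1,
        vz 0 h0 1 (-1) (by omega) (by omega) (by omega),
        vz 0 h0 1 (-1 + (2*1+3)) (by omega) (by omega) (by omega),
        vrt 0 h0 1 (-1 + 2*1) (by omega) (by omega) (by omega)]
      push_cast; ring
    have R1 : ((σ 1) (HahnSeries.single (1:ℤ) (1:ℂ))).coeff (-1) = t 1 / 2 := by
      rw [vt 1 h1 1 (-1) (by omega) (by omega) (by omega)]
      push_cast; ring
    have key := congrArg
      (fun φ : LaurentSeries ℂ →ₗ[ℂ] LaurentSeries ℂ =>
        (φ (HahnSeries.single (1:ℤ) (1:ℂ))).coeff (-1)) (hhom 0 1 h0 h1)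
    simp only [LinearMap.sub_apply, LinearMap.comp_apply, LinearMap.smul_apply,
      HahnSeries.coeff_sub, HahnSeries.coeff_smul, smul_eq_mul, zero_add] at key
    rw [L1, L2, R1] at key
    push_cast at key
    linear_combination -key
  -- E2 : r i = 0 for i ≠ 0
  have hr' : ∀ i : ℤ, -1 ≤ i → i ≠ 0 → r i = 0 := by
    intro i hi hi0
    have L1 : ((σ i) ((σ 0) (HahnSeries.single (0:ℤ) (1:ℂ)))).coeff 0
        = r i * (r 0 + t 0 / 2) := by
      rw [cs i hi,
        vrt 0 h0 0 0 (by omega) (by omega) (by omega),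
        vz 0 h0 0 (0 + (2*i+3)) (by omega) (by omega) (by omega),
        vz 0 h0 0 (0 + 2*i) (by omega) (by omega) (by omega)]
      push_cast; ring
    have L2 : ((σ 0) ((σ i) (HahnSeries.single (0:ℤ) (1:ℂ)))).coeff 0
        = r i * (r 0 + t 0 / 2) := by
      rw [cs 0 h0,
        vr i hi 0 0 (by omega) (by omega) (by omega),
        vz i hi 0 (0 + (2*0+3)) (by omega) (by omega) (by omega),
        vr i hi 0 (0 + 2*0) (by omega) (by omega) (by omega)]
      push_cast; ring
    have R1 : ((σ i) (HahnSeries.single (0:ℤ) (1:ℂ))).coeff 0 = r i := by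
      rw [vr i hi 0 0 (by omega) (by omega) (by omega)]
    have key := congrArg
      (fun φ : LaurentSeries ℂ →ₗ[ℂ] LaurentSeries ℂ =>
        (φ (HahnSeries.single (0:ℤ) (1:ℂ))).coeff 0) (hhom i 0 hi h0)
    simp only [LinearMap.sub_apply, LinearMap.comp_apply, LinearMap.smul_apply,
      HahnSeries.coeff_sub, HahnSeries.coeff_smul, smul_eq_mul, add_zero] at key
    rw [L1, L2, R1] at key
    push_cast at key
    have hzero : (i : ℂ) * r i = 0 := by linear_combination -key
    exact (mul_eq_zero.mp hzero).resolve_left (Int.cast_ne_zero.mpr hi0)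
  -- E3 : 2*(t 1 * t (-1)) = 2 * r 0 + t 0
  have R00 : ((σ 0) (HahnSeries.single (0:ℤ) (1:ℂ))).coeff 0 = r 0 + t 0 / 2 := by
    rw [vrt 0 h0 0 0 (by omega) (by omega) (by omega)]
    push_cast; ring
  have E3 : 2 * (t 1 * t (-1)) = 2 * r 0 + t 0 := by
    have L1 : ((σ 1) ((σ (-1)) (HahnSeries.single (0:ℤ) (1:ℂ)))).coeff 0
        = r 1 * r (-1) + 9/4 * (t 1 * t (-1)) := by
      rw [cs 1 h1,
        vr (-1) hm1 0 0 (by omega) (by omega) (by omega),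
        vz (-1) hm1 0 (0 + (2*1+3)) (by omega) (by omega) (by omega),
        vt (-1) hm1 0 (0 + 2*1) (by omega) (by omega) (by omega)]
      push_cast; ring
    have L2 : ((σ (-1)) ((σ 1) (HahnSeries.single (0:ℤ) (1:ℂ)))).coeff 0
        = r 1 * r (-1) + 1/4 * (t 1 * t (-1)) := by
      rw [cs (-1) hm1,
        vr 1 h1 0 0 (by omega) (by omega) (by omega),
        vz 1 h1 0 (0 + (2*(-1)+3)) (by omega) (by omega) (by omega),
        vt 1 h1 0 (0 + 2*(-1)) (by omega) (by omega) (by omega)]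
      push_cast; ring
    have key := congrArg
      (fun φ : LaurentSeries ℂ →ₗ[ℂ] LaurentSeries ℂ =>
        (φ (HahnSeries.single (0:ℤ) (1:ℂ))).coeff 0) (hhom 1 (-1) h1 hm1)
    simp only [LinearMap.sub_apply, LinearMap.comp_apply, LinearMap.smul_apply,
      HahnSeries.coeff_sub, HahnSeries.coeff_smul, smul_eq_mul,
      show (1:ℤ) + -1 = 0 by norm_num] at key
    rw [L1, L2, R00] at key
    push_cast at key
    linear_combination key
  -- E4 : the s-relation
  have E4 : ∀ i : ℤ, -1 ≤ i → i ≠ 0 →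
      t 0 * s i * (2*(i:ℂ)+3) - 3 * (s 0 * t i) = (i:ℂ) * s i := by
    intro i hi hi0
    have L1 : ((σ i) ((σ 0) (HahnSeries.single (0:ℤ) (1:ℂ)))).coeff (-(2*i+3))
        = s i * (r 0 + t 0 / 2) + t i * (-3 + (1 - 2*(i:ℂ))/2) * s 0 := by
      rw [cs i hi,
        vz 0 h0 0 (-(2*i+3)) (by omega) (by omega) (by omega),
        vrt 0 h0 0 (-(2*i+3) + (2*i+3)) (by omega) (by omega) (by omega),
        vs 0 h0 0 (-(2*i+3) + 2*i) (by omega) (by omega) (by omega)]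
      push_cast; ring
    have L2 : ((σ 0) ((σ i) (HahnSeries.single (0:ℤ) (1:ℂ)))).coeff (-(2*i+3))
        = r 0 * s i + s 0 * t i * (1 - 2*(i:ℂ))/2 + t 0 * (1/2 - (2*(i:ℂ)+3)) * s i := by
      rw [cs 0 h0,
        vs i hi 0 (-(2*i+3)) (by omega) (by omega) (by omega),
        vt i hi 0 (-(2*i+3) + (2*0+3)) (by omega) (by omega) (by omega),
        vs i hi 0 (-(2*i+3) + 2*0) (by omega) (by omega) (by omega)]
      push_cast; ring
    have R1 : ((σ i) (HahnSeries.single (0:ℤ) (1:ℂ))).coeff (-(2*i+3)) = s i := by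
      rw [vs i hi 0 (-(2*i+3)) (by omega) (by omega) (by omega)]
    have key := congrArg
      (fun φ : LaurentSeries ℂ →ₗ[ℂ] LaurentSeries ℂ =>
        (φ (HahnSeries.single (0:ℤ) (1:ℂ))).coeff (-(2*i+3))) (hhom i 0 hi h0)
    simp only [LinearMap.sub_apply, LinearMap.comp_apply, LinearMap.smul_apply,
      HahnSeries.coeff_sub, HahnSeries.coeff_smul, smul_eq_mul, add_zero] at key
    rw [L1, L2, R1] at key
    push_cast at key
    linear_combination key
  -- the series G_i = h^{i+1}/h' computed two ways
  have sig1Z : ∀ i : ℤ, -1 ≤ i →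
      σ i 1 * HahnSeries.single 1 1 - σ i (HahnSeries.single 1 1) = h ^ (i+1) / Dz h := by
    intro i hi
    rw [harise i hi]
    unfold sigmaHCB
    simp only [LinearMap.add_apply, LinearMap.sub_apply, LinearMap.smul_apply,
      LinearMap.comp_apply, mulOp_apply, Dz_one, Dz_Z, mul_zero, mul_one, smul_zero,
      neg_one_smul]
    simp only [← HahnSeries.single_zero_mul_eq_smul]
    ring
  have formZ : ∀ i : ℤ, -1 ≤ i →
      σ i 1 * HahnSeries.single 1 1 - σ i (HahnSeries.single 1 1)
        = HahnSeries.single (1-2*i) (-(t i)) := by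
    intro i hi
    rw [show (1 : LaurentSeries ℂ) = HahnSeries.single 0 1 from HahnSeries.single_zero_one.symm]
    ext m
    rw [HahnSeries.coeff_sub, mulZ, vv i hi, vv i hi, HahnSeries.coeff_single]
    split_ifs <;> first | contradiction | (exfalso; omega) | (push_cast; ring1)
  have hF : ∀ i : ℤ, -1 ≤ i → h ^ (i+1) / Dz h = HahnSeries.single (1-2*i) (-(t i)) :=
    fun i hi => (sig1Z i hi).symm.trans (formZ i hi)
  -- analysis at i = -1
  have hFm1 : (1 : LaurentSeries ℂ) / Dz h = HahnSeries.single 3 (-(t (-1))) := by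
    have hx := hF (-1) hm1
    rw [show (-1 : ℤ) + 1 = 0 by norm_num, zpow_zero,
      show (1:ℤ) - 2*(-1) = 3 by norm_num] at hx
    exact hx
  have htm1 : t (-1) ≠ 0 := by
    intro h0'
    rw [h0', neg_zero, HahnSeries.single_eq_zero, one_div, inv_eq_zero] at hFm1
    exact hd hFm1
  have hDz : Dz h = HahnSeries.single (-3) ((-(t (-1)))⁻¹) := by
    have h2 : (Dz h)⁻¹ = HahnSeries.single 3 (-(t (-1))) := by rw [← one_div]; exact hFm1
    rw [← inv_inv (Dz h), h2]
    exact HahnSeries.inv_single _ _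
  set T : ℂ := t 0 * (t (-1))⁻¹ with hTdef
  have hT : T ≠ 0 := mul_ne_zero ht0 (inv_ne_zero htm1)
  have hh : h = HahnSeries.single (-2) T := by
    have hF0 := hF 0 h0
    rw [show (0:ℤ) + 1 = 1 by norm_num, zpow_one, show (1:ℤ) - 2*0 = 1 by norm_num] at hF0
    have hx := (div_eq_iff hd).mp hF0
    rw [hDz, HahnSeries.single_mul_single] at hx
    rw [hx, show (1 + -3 : ℤ) = (-2:ℤ) by norm_num]
    congr 1
    rw [hTdef, inv_neg]
    ring
  have hti : ∀ i : ℤ, -1 ≤ i → t i = t (-1) * T^(i+1) := by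
    intro i hi
    have e : h ^ (i+1) = HahnSeries.single (1-2*i) (-(t i)) * Dz h :=
      (div_eq_iff hd).mp (hF i hi)
    rw [hDz, HahnSeries.single_mul_single, hh, single_zpow' _ _ hT (i+1)] at e
    have e2 := congrArg (fun x : LaurentSeries ℂ => x.coeff ((i+1)*(-2))) e
    simp only [HahnSeries.coeff_single] at e2
    rw [if_pos (show (i+1)*(-2) = 1 - 2*i + -3 by ring), inv_neg] at e2
    have e2' : T^(i+1) = t i / t (-1) := e2.trans (by rw [div_eq_mul_inv]; ring)
    have e3 := (eq_div_iff htm1).mp e2'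
    linear_combination -e3
  -- scalar consequences
  have ht1 : t 1 ≠ 0 := by
    rw [hti 1 h1]
    exact mul_ne_zero htm1 (zpow_ne_zero _ hT)
  have ht0v : t 0 = 1/2 := by
    have hx : (t 0 - 1/2) * t 1 = 0 := by linear_combination E1
    rcases mul_eq_zero.mp hx with h' | h'
    · exact sub_eq_zero.mp h'
    · exact absurd h' ht1
  have htm1T : t (-1) * T = 1/2 := by
    have hx := hti 0 h0
    rw [show (0:ℤ) + 1 = 1 by norm_num, zpow_one] at hx
    rw [← hx]
    exact ht0v
  have htiv : ∀ i : ℤ, -1 ≤ i → t i = 1/2 * T^i := by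
    intro i hi
    rw [hti i hi, zpow_add_one₀ hT]
    linear_combination T^i * htm1T
  have hr0 : r 0 = 0 := by
    have h14 : t 1 * t (-1) = 1/4 := by
      rw [htiv 1 h1, zpow_one]
      linear_combination (1/2) * htm1T
    have hx : 2 * (1/4 : ℂ) = 2 * r 0 + 1/2 := by rw [← h14, ← ht0v]; exact E3
    linear_combination (-1/2 : ℂ) * hx
  have hrall : ∀ i : ℤ, -1 ≤ i → r i = 0 := by
    intro i hi
    by_cases h' : i = 0
    · rw [h']; exact hr0
    · exact hr' i hi h'
  have hsall : ∀ i : ℤ, -1 ≤ i → s i = s 0 * T^i := by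
    intro i hi
    by_cases h' : i = 0
    · rw [h', zpow_zero, mul_one]
    · have e4 := E4 i hi h'
      rw [ht0v, htiv i hi] at e4
      linear_combination (2/3 : ℂ) * e4
  -- evaluation of σ i at 1, from the (h,c,b) form
  have sig1v : ∀ i : ℤ, -1 ≤ i →
      σ i 1 = (-(((i+1 : ℤ) : ℂ) * c)) • h^i + (h^(i+1)/Dz h) * b := by
    intro i hi
    rw [harise i hi]
    unfold sigmaHCB
    simp only [LinearMap.add_apply, LinearMap.sub_apply, LinearMap.smul_apply,
      LinearMap.comp_apply, mulOp_apply, Dz_one, mul_zero, smul_zero, mul_one, neg_one_smul]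
    rw [zero_sub, ← neg_smul]
  -- σ 0 1 and σ 1 1 from the r,s,t form
  have form1 : σ 0 1 = HahnSeries.single (-3 : ℤ) (s 0) + HahnSeries.single (0:ℤ) ((1:ℂ)/4) := by
    rw [show (1 : LaurentSeries ℂ) = HahnSeries.single 0 1 from HahnSeries.single_zero_one.symm]
    ext m
    rw [vv 0 h0, HahnSeries.coeff_add, HahnSeries.coeff_single, HahnSeries.coeff_single,
      hr0, ht0v]
    split_ifs <;>
      first
        | contradiction
        | (exfalso; omega)
        | (push_cast; ring1)
        | ((have hm : m = 0 := by omega); subst hm; push_cast; ring1)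
  have form11 : σ 1 1 = HahnSeries.single (-5 : ℤ) (s 1) + HahnSeries.single (-2:ℤ) (-(t 1)/2) := by
    rw [show (1 : LaurentSeries ℂ) = HahnSeries.single 0 1 from HahnSeries.single_zero_one.symm]
    ext m
    rw [vv 1 h1, HahnSeries.coeff_add, HahnSeries.coeff_single, HahnSeries.coeff_single,
      hrall 1 h1]
    split_ifs <;>
      first
        | contradiction
        | (exfalso; omega)
        | (push_cast; ring1)
        | ((have hm : m = -2 := by omega); subst hm; push_cast; ring1)
  -- solve for b using the i = 0 equation
  have e0 := (form1).symm.trans (sig1v 0 h0)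
  rw [show ((0:ℤ)+1) = (1:ℤ) by norm_num, zpow_one, zpow_zero,
    show (h / Dz h) = HahnSeries.single (1:ℤ) (-(t 0)) by
      have hx := hF 0 h0
      rwa [show (0:ℤ) + 1 = 1 by norm_num, zpow_one, show (1:ℤ) - 2*0 = 1 by norm_num] at hx,
    show (-(((1 : ℤ) : ℂ) * c)) • (1 : LaurentSeries ℂ) = HahnSeries.single (0:ℤ) (-c) by
      rw [← HahnSeries.single_zero_one, smul_single']; norm_num] at e0
  have hmain : HahnSeries.single (1:ℤ) (-(t 0)) * b
      = HahnSeries.single (-3 : ℤ) (s 0) + HahnSeries.single (0:ℤ) ((1:ℂ)/4)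
        - HahnSeries.single (0:ℤ) (-c) := by
    linear_combination -e0
  have hbv : b = HahnSeries.single (-1 : ℤ) (-2*c - 1/2)
      + HahnSeries.single (-4 : ℤ) (-2 * s 0) := by
    have expand : HahnSeries.single (1:ℤ) (-(t 0))
        * (HahnSeries.single (-1 : ℤ) (-2*c - 1/2) + HahnSeries.single (-4 : ℤ) (-2 * s 0))
        = HahnSeries.single (-3 : ℤ) (s 0) + HahnSeries.single (0:ℤ) ((1:ℂ)/4)
          - HahnSeries.single (0:ℤ) (-c) := by
      rw [mul_add, HahnSeries.single_mul_single, HahnSeries.single_mul_single, ht0v]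
      ext m
      simp only [HahnSeries.coeff_add, HahnSeries.coeff_sub, HahnSeries.coeff_single]
      split_ifs <;> first | contradiction | (exfalso; omega) | (push_cast; ring1)
    exact mul_left_cancel₀ (HahnSeries.single_ne_zero (neg_ne_zero.mpr ht0))
      (hmain.trans expand.symm)
  -- solve for c using the i = 1 equation
  have hc : c = 1/2 := by
    have e1' := (form11).symm.trans (sig1v 1 h1)
    rw [show (h^((1:ℤ)+1) / Dz h) = HahnSeries.single (-1:ℤ) (-(t 1)) by
        have hx := hF 1 h1
        rwa [show (1:ℤ) - 2*1 = -1 by norm_num] at hx,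
      zpow_one, hh, smul_single', hbv, mul_add, HahnSeries.single_mul_single,
      HahnSeries.single_mul_single] at e1'
    have e2 := congrArg (fun x : LaurentSeries ℂ => x.coeff (-2)) e1'
    simp only [HahnSeries.coeff_add, HahnSeries.coeff_single] at e2
    norm_num at e2
    rw [htiv 1 h1, zpow_one] at e2
    have hx : (c - 1/2) * T = 0 := by push_cast at e2; linear_combination e2
    rcases mul_eq_zero.mp hx with h' | h'
    · exact sub_eq_zero.mp h'
    · exact absurd h' hT
  -- assemble
  refine ⟨s 0, T, hT, ?_, ?_, hc, hrall, ?_⟩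
  · intro i hi
    rw [hform i hi, hrall i hi, hsall i hi, htiv i hi,
      show -(2 * i + 3) = -2 * i - 3 by ring]
    rw [zero_smul, zero_add, smul_add, smul_smul, smul_smul]
    rw [mul_comm (T^i) ((1:ℂ)/2), mul_comm (T^i) (s 0)]
    rw [add_comm]
  · rw [hh, smul_single', mul_one]
  · rw [hbv, hc]
    ext m
    simp only [HahnSeries.coeff_add, HahnSeries.coeff_sub, HahnSeries.coeff_smul,
      HahnSeries.coeff_single, smul_eq_mul]
    split_ifs <;> first | contradiction | (exfalso; omega) | (push_cast; ring1)
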